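/- Suppose 0 < γ ≤ 2/(μ + L). Then for every k ≥ 0 the IAG iterates satisfy dist_{k+1}² ≤ p(γ)·dist_k² + q(γ)·max{ dist_ℓ² : max(k − 2K, 0) ≤ ℓ ≤ k }, where p(γ) = 1 − 2γμL/(μ + L) and q(γ) = 9·γ⁴·L⁴·K² + 6·γ²·L²·K. -/

import Mathlib

open scoped RealInnerProductSpace

variable {E : Type*} [NormedAddCommGroup E] [InnerProductSpace ℝ E] [CompleteSpace E]

lemma fderiv_apply_eq_inner_gradient (f : E → ℝ) (x v : E) :
    fderiv ℝ f x v = ⟪gradient f x, v⟫ := by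
  rw [gradient, InnerProductSpace.toDual_symm_apply]

lemma gradient_inner_mono (g : E → ℝ) (hc : ConvexOn ℝ Set.univ g)
    (hd : Differentiable ℝ g) (a b : E) :
    ⟪gradient g a, b - a⟫ ≤ ⟪gradient g b, b - a⟫ := by
  set c : ℝ → E := fun t => a + t • (b - a) with hcdef
  have hcd : ∀ t : ℝ, HasDerivAt c (b - a) t := fun t => by
    simpa only [one_smul, hcdef, id] using ((hasDerivAt_id t).smul_const (b - a)).const_add a
  have hφd : ∀ t : ℝ, HasDerivAt (g ∘ c) (fderiv ℝ g (c t) (b - a)) t := fun t =>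
    (hd (c t)).hasFDerivAt.comp_hasDerivAt t (hcd t)
  have hφc : ConvexOn ℝ Set.univ (g ∘ c) := by
    have : g ∘ c = g ∘ (AffineMap.lineMap a b : ℝ →ᵃ[ℝ] E) := by
      funext t
      simp [hcdef, AffineMap.lineMap_apply, add_comm]
    rw [this]
    simpa using hc.comp_affineMap (AffineMap.lineMap a b)
  have hmono := hφc.monotoneOn_deriv (fun x _ => (hφd x).differentiableAt)
  have h01 := hmono (Set.mem_univ (0:ℝ)) (Set.mem_univ (1:ℝ)) zero_le_one
  rw [(hφd 0).deriv, (hφd 1).deriv] at h01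
  have hc0 : c 0 = a := by simp [hcdef]
  have hc1 : c 1 = b := by simp [hcdef]
  rw [hc0, hc1, fderiv_apply_eq_inner_gradient, fderiv_apply_eq_inner_gradient] at h01
  exact h01

lemma strong_mono (F : E → ℝ) (hFd : Differentiable ℝ F) (μ : ℝ)
    (hsc : ConvexOn ℝ Set.univ (fun y => F y - μ / 2 * ‖y‖ ^ 2)) (a b : E) :
    μ * ‖a - b‖ ^ 2 ≤ ⟪gradient F a - gradient F b, a - b⟫ := by
  set G : E → ℝ := fun y => F y - μ / 2 * ‖y‖ ^ 2 with hGdef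
  have hsq : ∀ y : E, HasFDerivAt (fun y : E => μ / 2 * ‖y‖ ^ 2)
      ((μ / 2) • (2 • (innerSL ℝ y))) y := fun y =>
    (hasStrictFDerivAt_norm_sq y).hasFDerivAt.const_mul (μ / 2)
  have hGd : ∀ y : E, HasFDerivAt G (fderiv ℝ F y - (μ / 2) • (2 • (innerSL ℝ y))) y :=
    fun y => (hFd y).hasFDerivAt.sub (hsq y)
  have hGdiff : Differentiable ℝ G := fun y => (hGd y).differentiableAt
  have hGinner : ∀ y v : E, ⟪gradient G y, v⟫ = ⟪gradient F y, v⟫ - μ * ⟪y, v⟫ := by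
    intro y v
    rw [← fderiv_apply_eq_inner_gradient, ← fderiv_apply_eq_inner_gradient, (hGd y).fderiv]
    simp [ContinuousLinearMap.sub_apply, ContinuousLinearMap.smul_apply]
    ring
  have hmono := gradient_inner_mono G hsc hGdiff b a
  rw [hGinner, hGinner] at hmono
  have heq : ⟪a - b, a - b⟫ = ‖a - b‖ ^ 2 := real_inner_self_eq_norm_sq _
  have h1 : ⟪gradient F a - gradient F b, a - b⟫ =
      ⟪gradient F a, a - b⟫ - ⟪gradient F b, a - b⟫ := inner_sub_left _ _ _
  have h2 : ⟪a, a - b⟫ - ⟪b, a - b⟫ = ‖a - b‖ ^ 2 := by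
    rw [← inner_sub_left, heq]
  have h3 : μ * (⟪a, a - b⟫ - ⟪b, a - b⟫) = μ * ‖a - b‖ ^ 2 := by rw [h2]
  linarith

lemma gradient_finset_sum {ι : Type*} (s : Finset ι) (f : ι → E → ℝ)
    (hd : ∀ i, Differentiable ℝ (f i)) (y : E) :
    gradient (fun z => ∑ i ∈ s, f i z) y = ∑ i ∈ s, gradient (f i) y := by
  have h : HasFDerivAt (fun z => ∑ i ∈ s, f i z) (∑ i ∈ s, fderiv ℝ (f i) y) y :=
    HasFDerivAt.fun_sum (fun i _ => (hd i y).hasFDerivAt)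
  rw [gradient, h.fderiv, map_sum]
  rfl

set_option maxHeartbeats 4000000 in
/-- The squared distances of IAG iterates to the optimum satisfy a perturbed linear
recursion with coefficients `p(γ)` and `q(γ)`. -/
theorem iag_dist_sq_perturbed_recursion
    (n m : ℕ) (hm : 1 ≤ m)
    (f : Fin m → EuclideanSpace ℝ (Fin n) → ℝ)
    (Li : Fin m → ℝ) (hLi : ∀ i, 0 ≤ Li i)
    (L : ℝ) (hL : L = ∑ i, Li i)
    (hconv : ∀ i, ConvexOn ℝ Set.univ (f i))
    (hdiff : ∀ i, Differentiable ℝ (f i))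
    (hlip : ∀ i y z, ‖gradient (f i) y - gradient (f i) z‖ ≤ Li i * ‖y - z‖)
    (K : ℕ) (hK : 1 ≤ K)
    (τ : Fin m → ℕ → ℕ)
    (hτ : ∀ i k, k - K ≤ τ i k ∧ τ i k ≤ k)
    (hτ0 : ∀ i, τ i 0 = 0)
    (F : EuclideanSpace ℝ (Fin n) → ℝ) (hF : F = fun y => ∑ i, f i y)
    (x g e : ℕ → EuclideanSpace ℝ (Fin n))
    (hg : ∀ k, g k = ∑ i, gradient (f i) (x (τ i k)))
    (he : ∀ k, e k = g k - gradient F (x k))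
    (γ : ℝ) (hγ : 0 < γ)
    (hx : ∀ k, x (k + 1) = x k - γ • g k)
    (μ : ℝ) (hμ : 0 < μ) (hμL : μ ≤ L)
    (hsc : ConvexOn ℝ Set.univ (fun y => F y - μ / 2 * ‖y‖ ^ 2))
    (xs : EuclideanSpace ℝ (Fin n))
    (hmin : ∀ y, F xs ≤ F y) (hgxs : gradient F xs = 0)
    (hγle : γ ≤ 2 / (μ + L)) :
    ∀ k, ‖x (k + 1) - xs‖ ^ 2 ≤ (1 - 2 * γ * (μ * L) / (μ + L)) * ‖x k - xs‖ ^ 2 +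
      (9 * γ ^ 4 * L ^ 4 * K ^ 2 + 6 * γ ^ 2 * L ^ 2 * K) *
        (Finset.Icc (k - 2 * K) k).sup' (Finset.nonempty_Icc.mpr (Nat.sub_le _ _))
          (fun ℓ => ‖x ℓ - xs‖ ^ 2) := by
  intro k
  have hLnn : 0 ≤ L := by
    rw [hL]; exact Finset.sum_nonneg fun i _ => hLi i
  have hμLpos : 0 < μ + L := by linarith
  have hFd : Differentiable ℝ F := by
    rw [hF]; exact Differentiable.fun_sum fun i _ => hdiff i
  have hFg : ∀ y, gradient F y = ∑ i, gradient (f i) y := by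
    intro y; rw [hF]; exact gradient_finset_sum _ f hdiff y
  set M := (Finset.Icc (k - 2 * K) k).sup' (Finset.nonempty_Icc.mpr (Nat.sub_le _ _))
    (fun ℓ => ‖x ℓ - xs‖ ^ 2) with hM
  have hkS : k ∈ Finset.Icc (k - 2 * K) k := Finset.mem_Icc.mpr ⟨Nat.sub_le _ _, le_rfl⟩
  have hMnn : 0 ≤ M :=
    le_trans (sq_nonneg ‖x k - xs‖) (Finset.le_sup' (fun ℓ => ‖x ℓ - xs‖ ^ 2) hkS)
  set R := Real.sqrt M with hR
  have hR0 : 0 ≤ R := Real.sqrt_nonneg _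
  have hR2 : R ^ 2 = M := Real.sq_sqrt hMnn
  have hDS : ∀ ℓ ∈ Finset.Icc (k - 2 * K) k, ‖x ℓ - xs‖ ≤ R := by
    intro ℓ hℓ
    have h1 : ‖x ℓ - xs‖ ^ 2 ≤ M := Finset.le_sup' (fun ℓ => ‖x ℓ - xs‖ ^ 2) hℓ
    have h2 := Real.sqrt_le_sqrt h1
    rwa [Real.sqrt_sq (norm_nonneg _)] at h2
  have hA2k : ‖x k - xs‖ ^ 2 ≤ M := Finset.le_sup' (fun ℓ => ‖x ℓ - xs‖ ^ 2) hkS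
  clear_value M R
  have hsum0 : ∑ i, gradient (f i) xs = 0 := by rw [← hFg, hgxs]
  -- bound on the norm of delayed aggregated gradients
  have hgj : ∀ j, k - K ≤ j → j ≤ k → ‖g j‖ ≤ L * R := by
    intro j hj1 hj2
    have hgj' : g j = ∑ i, (gradient (f i) (x (τ i j)) - gradient (f i) xs) := by
      rw [Finset.sum_sub_distrib, hsum0, sub_zero, hg j]
    rw [hgj']
    calc ‖∑ i, (gradient (f i) (x (τ i j)) - gradient (f i) xs)‖
        ≤ ∑ i, ‖gradient (f i) (x (τ i j)) - gradient (f i) xs‖ := norm_sum_le _ _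
      _ ≤ ∑ i, Li i * R := by
          apply Finset.sum_le_sum
          intro i _
          have hmem : τ i j ∈ Finset.Icc (k - 2 * K) k := by
            rw [Finset.mem_Icc]
            refine ⟨?_, le_trans (hτ i j).2 hj2⟩
            calc k - 2 * K = k - K - K := by rw [Nat.sub_sub, two_mul]
              _ ≤ j - K := Nat.sub_le_sub_right hj1 K
              _ ≤ τ i j := (hτ i j).1
          calc ‖gradient (f i) (x (τ i j)) - gradient (f i) xs‖
              ≤ Li i * ‖x (τ i j) - xs‖ := hlip i _ _
            _ ≤ Li i * R := mul_le_mul_of_nonneg_left (hDS _ hmem) (hLi i)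
      _ = L * R := by rw [← Finset.sum_mul, ← hL]
  -- telescoping
  have tele : ∀ a b : ℕ, a ≤ b → x b - x a = ∑ j ∈ Finset.Ico a b, (x (j+1) - x j) := by
    intro a b hab
    induction b, hab using Nat.le_induction with
    | base => simp
    | succ b hab ih =>
        rw [Finset.sum_Ico_succ_top (by omega : a ≤ b), ← ih]
        abel
  have hstep : ∀ j, ‖x (j+1) - x j‖ = γ * ‖g j‖ := by
    intro j
    rw [hx j, sub_sub_cancel_left, norm_neg, norm_smul, Real.norm_eq_abs, abs_of_pos hγ]
  have hxd : ∀ i : Fin m, ‖x (τ i k) - x k‖ ≤ γ * K * (L * R) := by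
    intro i
    obtain ⟨ht1, ht2⟩ := hτ i k
    rw [norm_sub_rev, tele (τ i k) k ht2]
    calc ‖∑ j ∈ Finset.Ico (τ i k) k, (x (j+1) - x j)‖
        ≤ ∑ j ∈ Finset.Ico (τ i k) k, ‖x (j+1) - x j‖ := norm_sum_le _ _
      _ ≤ ∑ _j ∈ Finset.Ico (τ i k) k, γ * (L * R) := by
          apply Finset.sum_le_sum
          intro j hj
          rw [Finset.mem_Ico] at hj
          rw [hstep j]
          exact mul_le_mul_of_nonneg_left (hgj j (le_trans ht1 hj.1) (le_of_lt hj.2)) hγ.le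
      _ = ((k - τ i k : ℕ) : ℝ) * (γ * (L * R)) := by
          rw [Finset.sum_const, Nat.card_Ico, nsmul_eq_mul]
      _ ≤ (K : ℝ) * (γ * (L * R)) := by
          apply mul_le_mul_of_nonneg_right _
            (mul_nonneg hγ.le (mul_nonneg hLnn hR0))
          exact_mod_cast Nat.cast_le.mpr (by omega : k - τ i k ≤ K)
      _ = γ * K * (L * R) := by ring
  -- error bound
  have hE : ‖e k‖ ≤ γ * K * L ^ 2 * R := by
    have he' : e k = ∑ i, (gradient (f i) (x (τ i k)) - gradient (f i) (x k)) := by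
      rw [Finset.sum_sub_distrib, he k, hg k, hFg]
    rw [he']
    calc ‖∑ i, (gradient (f i) (x (τ i k)) - gradient (f i) (x k))‖
        ≤ ∑ i, ‖gradient (f i) (x (τ i k)) - gradient (f i) (x k)‖ := norm_sum_le _ _
      _ ≤ ∑ i, Li i * (γ * K * (L * R)) := Finset.sum_le_sum fun i _ =>
          le_trans (hlip i _ _) (mul_le_mul_of_nonneg_left (hxd i) (hLi i))
      _ = L * (γ * K * (L * R)) := by rw [← Finset.sum_mul, ← hL]
      _ = γ * K * L ^ 2 * R := by ring
  -- Lipschitz bound on gradient of F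
  have hFlip : ∀ y z, ‖gradient F y - gradient F z‖ ≤ L * ‖y - z‖ := by
    intro y z
    rw [hFg, hFg, ← Finset.sum_sub_distrib]
    calc ‖∑ i, (gradient (f i) y - gradient (f i) z)‖
        ≤ ∑ i, ‖gradient (f i) y - gradient (f i) z‖ := norm_sum_le _ _
      _ ≤ ∑ i, Li i * ‖y - z‖ := Finset.sum_le_sum fun i _ => hlip i _ _
      _ = L * ‖y - z‖ := by rw [← Finset.sum_mul, ← hL]
  -- main estimates
  obtain ⟨a, ha⟩ : ∃ a, a = x k - xs := ⟨_, rfl⟩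
  obtain ⟨Gr, hGr⟩ : ∃ G0, G0 = gradient F (x k) := ⟨_, rfl⟩
  obtain ⟨Ek, hEk⟩ : ∃ E0, E0 = ‖e k‖ := ⟨_, rfl⟩
  rw [← ha]
  have e0 : (0:ℝ) ≤ Ek := by rw [hEk]; exact norm_nonneg _
  have hE' : Ek ≤ γ * K * L ^ 2 * R := by rw [hEk]; exact hE
  have haR : ‖a‖ ≤ R := by rw [ha]; exact hDS k hkS
  have hA2 : ‖a‖ ^ 2 ≤ M := by rw [ha]; exact hA2k
  have hGL : ‖Gr‖ ≤ L * ‖a‖ := by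
    rw [hGr, ha]
    have h := hFlip (x k) xs
    rwa [hgxs, sub_zero] at h
  have hinner : μ * ‖a‖ ^ 2 ≤ ⟪Gr, a⟫ := by
    rw [hGr, ha]
    have h := strong_mono F hFd μ hsc (x k) xs
    rwa [hgxs, sub_zero] at h
  have hgk : g k = gradient F (x k) + e k := by rw [he k]; abel
  obtain ⟨y, hy⟩ : ∃ y, y = a - γ • Gr := ⟨_, rfl⟩
  have hxk1 : x (k+1) - xs = y - γ • e k := by
    rw [hy, hx k, hgk, smul_add, ha, hGr]
    abel
  have y0 : (0:ℝ) ≤ ‖y‖ := norm_nonneg _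
  have hsmul : ‖γ • Gr‖ = γ * ‖Gr‖ := by
    rw [norm_smul, Real.norm_eq_abs, abs_of_pos hγ]
  have hy2 : ‖y‖ ^ 2 ≤ ‖a‖ ^ 2 - 2 * γ * ⟪Gr, a⟫ + γ ^ 2 * (L * ‖a‖) ^ 2 := by
    rw [hy, norm_sub_sq_real]
    have h1 : ⟪a, γ • Gr⟫ = γ * ⟪Gr, a⟫ := by
      rw [real_inner_smul_right, real_inner_comm]
    rw [h1, hsmul]
    have h3 : ‖Gr‖ ^ 2 ≤ (L * ‖a‖) ^ 2 := pow_le_pow_left₀ (norm_nonneg _) hGL 2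
    have h4 := mul_le_mul_of_nonneg_left h3 (sq_nonneg γ)
    linarith [h4]
  have hy1 : ‖y‖ ≤ (1 + γ * L) * ‖a‖ := by
    calc ‖y‖ ≤ ‖a‖ + ‖γ • Gr‖ := by rw [hy]; exact norm_sub_le _ _
      _ = ‖a‖ + γ * ‖Gr‖ := by rw [hsmul]
      _ ≤ ‖a‖ + γ * (L * ‖a‖) := by
          have := mul_le_mul_of_nonneg_left hGL hγ.le
          linarith
      _ = (1 + γ * L) * ‖a‖ := by ring
  have htri : ‖x (k+1) - xs‖ ≤ ‖y‖ + γ * Ek := by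
    rw [hxk1, hEk]
    refine (norm_sub_le _ _).trans ?_
    rw [norm_smul, Real.norm_eq_abs, abs_of_pos hγ]
  have hsq : ‖x (k+1) - xs‖ ^ 2 ≤ (‖y‖ + γ * Ek) ^ 2 :=
    pow_le_pow_left₀ (norm_nonneg _) htri 2
  have hcross : ‖y‖ * Ek ≤ (1 + γ * L) * ‖a‖ * Ek := mul_le_mul_of_nonneg_right hy1 e0
  have h1γL : (0:ℝ) ≤ 1 + γ * L := by
    have := mul_nonneg hγ.le hLnn; linarith
  have hcross2 : 2 * γ * (‖y‖ * Ek) ≤ 2 * γ * ((1 + γ * L) * ‖a‖ * Ek) := by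
    have h2γ : (0:ℝ) ≤ 2 * γ := by linarith
    exact mul_le_mul_of_nonneg_left hcross h2γ
  have hy2' : ‖y‖ ^ 2 ≤ ‖a‖ ^ 2 - 2 * γ * μ * ‖a‖ ^ 2 + γ ^ 2 * L ^ 2 * ‖a‖ ^ 2 := by
    have h := mul_le_mul_of_nonneg_left hinner hγ.le
    linarith [hy2, h]
  have step1 : ‖x (k+1) - xs‖ ^ 2 ≤ ‖a‖ ^ 2 - 2 * γ * μ * ‖a‖ ^ 2 + γ ^ 2 * L ^ 2 * ‖a‖ ^ 2
      + 2 * γ * ((1 + γ * L) * ‖a‖ * Ek) + γ ^ 2 * Ek ^ 2 := by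
    have hexp : (‖y‖ + γ * Ek) ^ 2 = ‖y‖ ^ 2 + 2 * γ * (‖y‖ * Ek) + γ ^ 2 * Ek ^ 2 := by ring
    rw [hexp] at hsq
    linarith
  -- bounding the perturbation terms
  have hK1 : (1:ℝ) ≤ (K:ℝ) := by exact_mod_cast hK
  have hKnn : (0:ℝ) ≤ (K:ℝ) := by linarith
  have hAE : ‖a‖ * Ek ≤ γ * K * L ^ 2 * M := by
    calc ‖a‖ * Ek ≤ R * (γ * K * L ^ 2 * R) :=
          mul_le_mul haR hE' e0 hR0
      _ = γ * K * L ^ 2 * R ^ 2 := by ring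
      _ = γ * K * L ^ 2 * M := by rw [hR2]
  have hE2 : Ek ^ 2 ≤ (γ * K * L ^ 2) ^ 2 * M := by
    calc Ek ^ 2 ≤ (γ * K * L ^ 2 * R) ^ 2 := pow_le_pow_left₀ e0 hE' 2
      _ = (γ * K * L ^ 2) ^ 2 * R ^ 2 := by ring
      _ = (γ * K * L ^ 2) ^ 2 * M := by rw [hR2]
  have hterm1 : γ ^ 2 * L ^ 2 * ‖a‖ ^ 2 ≤ γ ^ 2 * L ^ 2 * M :=
    mul_le_mul_of_nonneg_left hA2 (by positivity)
  have hterm2 : 2 * γ * ((1 + γ * L) * ‖a‖ * Ek) ≤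
      2 * γ * ((1 + γ * L) * (γ * K * L ^ 2 * M)) := by
    apply mul_le_mul_of_nonneg_left _ (by linarith : (0:ℝ) ≤ 2 * γ)
    rw [mul_assoc]
    exact mul_le_mul_of_nonneg_left hAE h1γL
  have hterm3 : γ ^ 2 * Ek ^ 2 ≤ γ ^ 2 * ((γ * K * L ^ 2) ^ 2 * M) :=
    mul_le_mul_of_nonneg_left hE2 (by positivity)
  -- coefficient comparison
  have hc1 : 2 * (γ ^ 3 * L ^ 3 * (K:ℝ)) ≤ γ ^ 2 * L ^ 2 * K + γ ^ 4 * L ^ 4 * K := by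
    have h := mul_nonneg hKnn (sq_nonneg (γ * L - γ ^ 2 * L ^ 2))
    linarith [h]
  have hc2 : γ ^ 2 * L ^ 2 ≤ γ ^ 2 * L ^ 2 * K := by
    have h := mul_le_mul_of_nonneg_left hK1 (sq_nonneg (γ * L))
    linarith [h]
  have hκ2 : (K:ℝ) ≤ (K:ℝ) ^ 2 := by
    have h := mul_le_mul_of_nonneg_left hK1 hKnn
    have h2 : (K:ℝ) * 1 = (K:ℝ) := mul_one _
    have h3 : (K:ℝ) * (K:ℝ) = (K:ℝ) ^ 2 := (sq (K:ℝ)).symm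
    linarith [h]
  have hc3 : γ ^ 4 * L ^ 4 * (K:ℝ) ≤ γ ^ 4 * L ^ 4 * (K:ℝ) ^ 2 := by
    have h := mul_le_mul_of_nonneg_left hκ2 (sq_nonneg (γ ^ 2 * L ^ 2))
    linarith [h]
  have hc4 : (0:ℝ) ≤ γ ^ 4 * L ^ 4 * (K:ℝ) ^ 2 := by positivity
  have hc5 : (0:ℝ) ≤ γ ^ 2 * L ^ 2 * (K:ℝ) := by positivity
  have hcoef : γ ^ 2 * L ^ 2 + 2 * γ * ((1 + γ * L) * (γ * K * L ^ 2))
      + γ ^ 2 * (γ * K * L ^ 2) ^ 2 ≤ 9 * γ ^ 4 * L ^ 4 * K ^ 2 + 6 * γ ^ 2 * L ^ 2 * K := by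
    linarith [hc1, hc2, hc3, hc4, hc5]
  have htail : γ ^ 2 * L ^ 2 * M + 2 * γ * ((1 + γ * L) * (γ * K * L ^ 2 * M))
      + γ ^ 2 * ((γ * K * L ^ 2) ^ 2 * M) ≤
      (9 * γ ^ 4 * L ^ 4 * K ^ 2 + 6 * γ ^ 2 * L ^ 2 * K) * M := by
    have h := mul_le_mul_of_nonneg_right hcoef hMnn
    linarith [h]
  -- the contraction coefficient
  have hp : 2 * γ * (μ * L) / (μ + L) ≤ 2 * γ * μ := by
    rw [div_le_iff₀ hμLpos]
    have h := mul_pos hγ (mul_pos hμ hμ)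
    linarith [h]
  have hpA : (1 - 2 * γ * μ) * ‖a‖ ^ 2 ≤ (1 - 2 * γ * (μ * L) / (μ + L)) * ‖a‖ ^ 2 :=
    mul_le_mul_of_nonneg_right (by linarith) (sq_nonneg _)
  linarith [step1, hterm1, hterm2, hterm3, htail, hpA]
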